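/- arXiv:2104.14458 — 5 statements merged into one kernel-verified Lean document; each statement's English description precedes it below -/
import Mathlib

section
/- Let (Ω,𝓕,P) be a probability space and U : Ω × ℝ → ℝ be such that ω ↦ U(ω,z) is measurable and integrable for each z below. Let a ≤ b be reals and suppose U is locally concave or convex on [a,b], meaning: either for P-a.e. ω the map z ↦ U(ω,z) is twice differentiable on [a,b] with second derivative ≤ 0 everywhere on [a,b], or for P-a.e. ω it is twice differentiable on [a,b] with second derivative ≥ 0 everywhere on [a,b]. Let x, x′, x_1, x_2 ∈ [a,b] satisfy x < x′, x_1 ≤ x′ ≤ x_2, x_1 ≠ x and x_2 ≠ x. For z ≠ x define S(z) := E[U(·,z) − U(·,x)]/(z − x). Then (x′ − x)·min{S(x_1), S(x_2)} ≤ E[U(·,x′) − U(·,x)] ≤ (x′ − x)·max{S(x_1), S(x_2)}. -/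
open MeasureTheory Set Filter

/-- bounds on the average treatment effect `E[U(·,x') − U(·,x)]` under a
local concavity-or-convexity condition, in terms of the normalized effects
`S(z) = E[U(·,z) − U(·,x)]/(z − x)` at identified points `x₁ ≤ x' ≤ x₂`. -/
theorem stmt4
    {Ω : Type*} [MeasurableSpace Ω] (P : Measure Ω) (hP : IsProbabilityMeasure P)
    (U : Ω → ℝ → ℝ) (a b : ℝ) (hab : a ≤ b)
    (x x' x₁ x₂ : ℝ)
    (hx : x ∈ Icc a b) (hx' : x' ∈ Icc a b) (hx₁ : x₁ ∈ Icc a b) (hx₂ : x₂ ∈ Icc a b)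
    -- measurability and integrability of ω ↦ U(ω,z) for each z involved
    (hmeas : ∀ z ∈ ({x, x', x₁, x₂} : Set ℝ), Measurable (fun ω => U ω z))
    (hint : ∀ z ∈ ({x, x', x₁, x₂} : Set ℝ), Integrable (fun ω => U ω z) P)
    -- local concavity or convexity on [a,b]: either a.e. twice differentiable with
    -- second derivative ≤ 0 everywhere on [a,b], or a.e. with second derivative ≥ 0
    (hconcavex :
      (∀ᵐ ω ∂P, ∃ U' U'' : ℝ → ℝ, ∀ z ∈ Icc a b,
        HasDerivWithinAt (U ω) (U' z) (Icc a b) z ∧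
        HasDerivWithinAt U' (U'' z) (Icc a b) z ∧ U'' z ≤ 0) ∨
      (∀ᵐ ω ∂P, ∃ U' U'' : ℝ → ℝ, ∀ z ∈ Icc a b,
        HasDerivWithinAt (U ω) (U' z) (Icc a b) z ∧
        HasDerivWithinAt U' (U'' z) (Icc a b) z ∧ 0 ≤ U'' z))
    (hxx' : x < x') (hx₁x' : x₁ ≤ x') (hx'x₂ : x' ≤ x₂) (hne₁ : x₁ ≠ x) (hne₂ : x₂ ≠ x)
    (S : ℝ → ℝ) (hS : ∀ z, S z = (∫ ω, (U ω z - U ω x) ∂P) / (z - x)) :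
    (x' - x) * min (S x₁) (S x₂) ≤ (∫ ω, (U ω x' - U ω x) ∂P) ∧
      (∫ ω, (U ω x' - U ω x) ∂P) ≤ (x' - x) * max (S x₁) (S x₂) := by
  have hxmem : x ∈ ({x, x', x₁, x₂} : Set ℝ) := by simp
  have hintz : ∀ z ∈ ({x, x', x₁, x₂} : Set ℝ),
      Integrable (fun ω => slope (U ω) x z) P := by
    intro z hz
    simpa only [slope_def_field, Pi.sub_apply] using ((hint z hz).sub (hint x hxmem)).div_const (z - x)
  have hSz : ∀ z, z ≠ x → S z = ∫ ω, slope (U ω) x z ∂P := by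
    intro z hz
    simp only [slope_def_field]
    rw [hS, integral_div]
  have hne' : x' ≠ x := ne_of_gt hxx'
  have hm₁ : x₁ ∈ Icc a b \ {x} := ⟨hx₁, hne₁⟩
  have hm' : x' ∈ Icc a b \ {x} := ⟨hx', hne'⟩
  have hm₂ : x₂ ∈ Icc a b \ {x} := ⟨hx₂, hne₂⟩
  have hmem' : x' ∈ ({x, x', x₁, x₂} : Set ℝ) := by simp
  have hmem₁ : x₁ ∈ ({x, x', x₁, x₂} : Set ℝ) := by simp
  have hmem₂ : x₂ ∈ ({x, x', x₁, x₂} : Set ℝ) := by simp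
  have hbound : min (S x₁) (S x₂) ≤ S x' ∧ S x' ≤ max (S x₁) (S x₂) := by
    rcases hconcavex with h | h
    · -- concave case
      have hcc : ∀ᵐ ω ∂P, ConcaveOn ℝ (Icc a b) (U ω) := by
        refine h.mono fun ω ⟨U', U'', hω⟩ => ?_
        refine concaveOn_of_hasDerivWithinAt2_nonpos (convex_Icc a b) (f' := U') (f'' := U'')
          (fun z hz => (hω z hz).1.differentiableWithinAt.continuousWithinAt)
          (fun z hz => ((hω z (interior_subset hz)).1).mono interior_subset)
          (fun z hz => ((hω z (interior_subset hz)).2.1).mono interior_subset)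
          (fun z hz => (hω z (interior_subset hz)).2.2)
      have h1 : S x' ≤ S x₁ := by
        rw [hSz x' hne', hSz x₁ hne₁]
        refine integral_mono_ae (hintz x' hmem') (hintz x₁ hmem₁) ?_
        exact hcc.mono fun ω hω => (hω.slope_anti hx hm₁ hm' hx₁x' : _)
      have h2 : S x₂ ≤ S x' := by
        rw [hSz x' hne', hSz x₂ hne₂]
        refine integral_mono_ae (hintz x₂ hmem₂) (hintz x' hmem') ?_
        exact hcc.mono fun ω hω => (hω.slope_anti hx hm' hm₂ hx'x₂ : _)
      exact ⟨le_trans (min_le_right _ _) h2, le_trans h1 (le_max_left _ _)⟩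
    · -- convex case
      have hcc : ∀ᵐ ω ∂P, ConvexOn ℝ (Icc a b) (U ω) := by
        refine h.mono fun ω ⟨U', U'', hω⟩ => ?_
        refine convexOn_of_hasDerivWithinAt2_nonneg (convex_Icc a b) (f' := U') (f'' := U'')
          (fun z hz => (hω z hz).1.differentiableWithinAt.continuousWithinAt)
          (fun z hz => ((hω z (interior_subset hz)).1).mono interior_subset)
          (fun z hz => ((hω z (interior_subset hz)).2.1).mono interior_subset)
          (fun z hz => (hω z (interior_subset hz)).2.2)
      have h1 : S x₁ ≤ S x' := by
        rw [hSz x' hne', hSz x₁ hne₁]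
        refine integral_mono_ae (hintz x₁ hmem₁) (hintz x' hmem') ?_
        exact hcc.mono fun ω hω => (hω.slope_mono hx hm₁ hm' hx₁x' : _)
      have h2 : S x' ≤ S x₂ := by
        rw [hSz x' hne', hSz x₂ hne₂]
        refine integral_mono_ae (hintz x' hmem') (hintz x₂ hmem₂) ?_
        exact hcc.mono fun ω hω => (hω.slope_mono hx hm' hm₂ hx'x₂ : _)
      exact ⟨le_trans (min_le_left _ _) h1, le_trans h2 (le_max_right _ _)⟩
  have hpos : (0:ℝ) < x' - x := sub_pos.2 hxx'
  have hI : (∫ ω, (U ω x' - U ω x) ∂P) = (x' - x) * S x' := by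
    rw [hS]
    field_simp
  rw [hI]
  exact ⟨mul_le_mul_of_nonneg_left hbound.1 hpos.le,
    mul_le_mul_of_nonneg_left hbound.2 hpos.le⟩
end

section
/- Let (Ω,𝓕,P) be a probability space and U : Ω × ℝ → ℝ be such that ω ↦ U(ω,z) is measurable and integrable for each z below. Let a ≤ b be reals and suppose U is locally concave or convex on [a,b], meaning: either for P-a.e. ω the map z ↦ U(ω,z) is twice differentiable on [a,b] with second derivative ≤ 0 everywhere on [a,b], or for P-a.e. ω it is twice differentiable on [a,b] with second derivative ≥ 0 everywhere on [a,b]. Let x, x_1, x_2 ∈ [a,b] with x_1 < x < x_2, and suppose ω ↦ ∂U/∂z(ω,x) is integrable. For z ≠ x define S(z) := E[U(·,z) − U(·,x)]/(z − x). Then min{S(x_1), S(x_2)} ≤ E[∂U/∂z(·,x)] ≤ max{S(x_1), S(x_2)}. -/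
open MeasureTheory Set Filter

lemma key_slope {f f' f'' : ℝ → ℝ} {a b x x₁ x₂ d : ℝ}
    (hx₁ : x₁ ∈ Icc a b) (hx₂ : x₂ ∈ Icc a b)
    (h : ∀ z ∈ Icc a b, HasDerivWithinAt f (f' z) (Icc a b) z ∧
        HasDerivWithinAt f' (f'' z) (Icc a b) z ∧ f'' z ≤ 0)
    (h1 : x₁ < x) (h2 : x < x₂)
    (hd : HasDerivWithinAt f d (Icc a b) x) :
    (f x₂ - f x) / (x₂ - x) ≤ d ∧ d ≤ (f x₁ - f x) / (x₁ - x) := by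
  have hx : x ∈ Icc a b := ⟨hx₁.1.trans h1.le, h2.le.trans hx₂.2⟩
  have hab' : a < b := lt_of_le_of_lt hx₁.1 (h1.trans (lt_of_lt_of_le h2 hx₂.2))
  have hud : UniqueDiffOn ℝ (Icc a b) := uniqueDiffOn_Icc hab'
  have hdx : d = f' x := by
    rw [← hd.derivWithin (hud x hx), ← (h x hx).1.derivWithin (hud x hx)]
  -- f' is antitone on Icc a b
  have hcont' : ContinuousOn f' (Icc a b) := fun z hz =>
    (h z hz).2.1.differentiableWithinAt.continuousWithinAt
  have hcont : ContinuousOn f (Icc a b) := fun z hz =>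
    (h z hz).1.differentiableWithinAt.continuousWithinAt
  have hderivAt : ∀ z ∈ Ioo a b, HasDerivAt f' (f'' z) z := by
    intro z hz
    exact ((h z (Ioo_subset_Icc_self hz)).2.1).hasDerivAt (Icc_mem_nhds hz.1 hz.2)
  have hanti : AntitoneOn f' (Icc a b) := by
    refine antitoneOn_of_deriv_nonpos (convex_Icc a b) hcont' ?_ ?_
    · intro z hz
      rw [interior_Icc] at hz
      exact (hderivAt z hz).differentiableAt.differentiableWithinAt
    · intro z hz
      rw [interior_Icc] at hz
      rw [(hderivAt z hz).deriv]
      exact (h z (Ioo_subset_Icc_self hz)).2.2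
  have hfderivAt : ∀ z ∈ Ioo a b, HasDerivAt f (f' z) z := by
    intro z hz
    exact ((h z (Ioo_subset_Icc_self hz)).1).hasDerivAt (Icc_mem_nhds hz.1 hz.2)
  constructor
  · -- MVT on [x, x₂]
    obtain ⟨c, hc, hceq⟩ := exists_hasDerivAt_eq_slope f f' h2
      (hcont.mono (Icc_subset_Icc hx.1 hx₂.2))
      (fun z hz => hfderivAt z ⟨lt_of_le_of_lt hx.1 hz.1, lt_of_lt_of_le hz.2 hx₂.2⟩)
    rw [hdx, ← hceq]
    exact hanti hx ⟨hx.1.trans hc.1.le, hc.2.le.trans hx₂.2⟩ hc.1.le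
  · -- MVT on [x₁, x]
    obtain ⟨c, hc, hceq⟩ := exists_hasDerivAt_eq_slope f f' h1
      (hcont.mono (Icc_subset_Icc hx₁.1 hx.2))
      (fun z hz => hfderivAt z ⟨lt_of_le_of_lt hx₁.1 hz.1, lt_of_lt_of_le hz.2 hx.2⟩)
    have : (f x₁ - f x) / (x₁ - x) = (f x - f x₁) / (x - x₁) := by
      rw [← neg_div_neg_eq]; ring_nf
    rw [this, hdx, ← hceq]
    exact hanti ⟨hx₁.1.trans hc.1.le, hc.2.le.trans hx.2⟩ hx hc.2.le

/-- bounds on the average marginal effect `E[∂U/∂z(·,x)]` under a local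
concavity-or-convexity condition, in terms of the normalized effects
`S(z) = E[U(·,z) − U(·,x)]/(z − x)` at identified points `x₁ < x < x₂`. -/
theorem stmt5
    {Ω : Type*} [MeasurableSpace Ω] (P : Measure Ω) (hP : IsProbabilityMeasure P)
    (U : Ω → ℝ → ℝ) (a b : ℝ) (hab : a ≤ b)
    (x x₁ x₂ : ℝ)
    (hx : x ∈ Icc a b) (hx₁ : x₁ ∈ Icc a b) (hx₂ : x₂ ∈ Icc a b)
    -- measurability and integrability of ω ↦ U(ω,z) for each z involved
    (hmeas : ∀ z ∈ ({x, x₁, x₂} : Set ℝ), Measurable (fun ω => U ω z))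
    (hint : ∀ z ∈ ({x, x₁, x₂} : Set ℝ), Integrable (fun ω => U ω z) P)
    -- local concavity or convexity on [a,b]
    (hconcavex :
      (∀ᵐ ω ∂P, ∃ U' U'' : ℝ → ℝ, ∀ z ∈ Icc a b,
        HasDerivWithinAt (U ω) (U' z) (Icc a b) z ∧
        HasDerivWithinAt U' (U'' z) (Icc a b) z ∧ U'' z ≤ 0) ∨
      (∀ᵐ ω ∂P, ∃ U' U'' : ℝ → ℝ, ∀ z ∈ Icc a b,
        HasDerivWithinAt (U ω) (U' z) (Icc a b) z ∧
        HasDerivWithinAt U' (U'' z) (Icc a b) z ∧ 0 ≤ U'' z))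
    (hx₁x : x₁ < x) (hxx₂ : x < x₂)
    -- the (partial) derivative of U in its second argument at x, integrable
    (D : Ω → ℝ) (hD : ∀ᵐ ω ∂P, HasDerivWithinAt (U ω) (D ω) (Icc a b) x)
    (hDmeas : Measurable D) (hDint : Integrable D P)
    (S : ℝ → ℝ) (hS : ∀ z, S z = (∫ ω, (U ω z - U ω x) ∂P) / (z - x)) :
    min (S x₁) (S x₂) ≤ (∫ ω, D ω ∂P) ∧ (∫ ω, D ω ∂P) ≤ max (S x₁) (S x₂) := by
  have hintx : Integrable (fun ω => U ω x) P := hint x (by simp)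
  have hint1 : Integrable (fun ω => U ω x₁) P := hint x₁ (by simp)
  have hint2 : Integrable (fun ω => U ω x₂) P := hint x₂ (by simp)
  have hI1 : Integrable (fun ω => (U ω x₁ - U ω x) / (x₁ - x)) P :=
    (hint1.sub hintx).div_const _
  have hI2 : Integrable (fun ω => (U ω x₂ - U ω x) / (x₂ - x)) P :=
    (hint2.sub hintx).div_const _
  have hS1 : S x₁ = ∫ ω, (U ω x₁ - U ω x) / (x₁ - x) ∂P := by
    rw [hS, integral_div]
  have hS2 : S x₂ = ∫ ω, (U ω x₂ - U ω x) / (x₂ - x) ∂P := by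
    rw [hS, integral_div]
  rcases hconcavex with hc | hc
  · -- concave: S x₂ ≤ ∫ D ≤ S x₁
    have hae : ∀ᵐ ω ∂P, (U ω x₂ - U ω x) / (x₂ - x) ≤ D ω ∧
        D ω ≤ (U ω x₁ - U ω x) / (x₁ - x) := by
      filter_upwards [hc, hD] with ω ⟨U', U'', hU⟩ hDω
      exact key_slope hx₁ hx₂ hU hx₁x hxx₂ hDω
    have h2 : S x₂ ≤ ∫ ω, D ω ∂P := by
      rw [hS2]
      exact integral_mono_ae hI2 hDint (hae.mono fun ω h => h.1)
    have h1 : (∫ ω, D ω ∂P) ≤ S x₁ := by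
      rw [hS1]
      exact integral_mono_ae hDint hI1 (hae.mono fun ω h => h.2)
    exact ⟨le_trans (min_le_right _ _) h2, le_trans h1 (le_max_left _ _)⟩
  · -- convex: apply key_slope to -U ω
    have hae : ∀ᵐ ω ∂P, (U ω x₁ - U ω x) / (x₁ - x) ≤ D ω ∧
        D ω ≤ (U ω x₂ - U ω x) / (x₂ - x) := by
      filter_upwards [hc, hD] with ω ⟨U', U'', hU⟩ hDω
      have hU' : ∀ z ∈ Icc a b, HasDerivWithinAt (fun y => -(U ω y)) (-(U' z)) (Icc a b) z ∧
          HasDerivWithinAt (fun y => -(U' y)) (-(U'' z)) (Icc a b) z ∧ -(U'' z) ≤ 0 := by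
        intro z hz
        exact ⟨(hU z hz).1.neg, (hU z hz).2.1.neg, neg_nonpos.mpr (hU z hz).2.2⟩
      have := key_slope hx₁ hx₂ hU' hx₁x hxx₂ hDω.neg
      constructor
      · have := this.2
        rw [show -(U ω x₁) - -(U ω x) = -(U ω x₁ - U ω x) by ring, neg_div] at this
        linarith
      · have := this.1
        rw [show -(U ω x₂) - -(U ω x) = -(U ω x₂ - U ω x) by ring, neg_div] at this
        linarith
    have h1 : S x₁ ≤ ∫ ω, D ω ∂P := by
      rw [hS1]
      exact integral_mono_ae hI1 hDint (hae.mono fun ω h => h.1)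
    have h2 : (∫ ω, D ω ∂P) ≤ S x₂ := by
      rw [hS2]
      exact integral_mono_ae hDint hI2 (hae.mono fun ω h => h.2)
    exact ⟨le_trans (min_le_left _ _) h1, le_trans h2 (le_max_right _ _)⟩
end

section
/- Let κ be a Markov kernel assigning to each x ∈ ℝ a probability measure κ(x) on a measurable space Ω, let 𝒱 be an open interval containing x_0 ∈ ℝ, and let U : Ω × ℝ → ℝ be jointly measurable. Assume: (i) for every x ∈ 𝒱 and κ(x)-a.e. ω, the map z ↦ U(ω,z) is differentiable on 𝒱 and there is a measurable A : Ω → [0,∞) with |∂U/∂z(ω,z′) − ∂U/∂z(ω,z)| ≤ A(ω)|z′ − z| for all z, z′ ∈ 𝒱, such that x ↦ ∫ A dκ(x) is finite and continuous on 𝒱; (ii) for every z′ ∈ 𝒱, the map x ↦ ∫ ∂U/∂z(ω,z′) dκ(x)(ω) is continuous on 𝒱. Let (x_n) be a sequence in 𝒱 with x_n → x_0 and let q : ℝ → ℝ satisfy q(x_n) ∈ 𝒱, q(x_n) ≠ x_n and q(x_n) → x_0. Then ∫ [U(ω, q(x_n)) − U(ω, x_n)]/(q(x_n) − x_n) dκ(x_n)(ω)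 → ∫ ∂U/∂z(ω, x_0) dκ(x_0)(ω) as n → ∞. -/
open MeasureTheory Set Filter ProbabilityTheory

/-- convergence of the identified normalized treatment effects to the
average marginal effect. Under a.e. differentiability with a Lipschitz-in-`z`
derivative whose modulus has a continuous conditional mean, and continuity in `x` of
the conditional mean of the derivative, the normalized effects
`∫ [U(ω, q(xₙ)) − U(ω, xₙ)]/(q(xₙ) − xₙ) dκ(xₙ)` converge to
`∫ ∂U/∂z(ω, x₀) dκ(x₀)` along any sequences `xₙ → x₀`, `q(xₙ) → x₀` in `𝒱`. -/
theorem stmt9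
    {Ω : Type*} [MeasurableSpace Ω]
    (κ : Kernel ℝ Ω) [IsMarkovKernel κ]
    (V : Set ℝ) (hVopen : IsOpen V) (hVconn : V.OrdConnected)
    (x₀ : ℝ) (hx₀ : x₀ ∈ V)
    (U U' : Ω → ℝ → ℝ)
    (hUmeas : Measurable (Function.uncurry U))
    (hU'meas : Measurable (Function.uncurry U'))
    -- (i) a.e. differentiability on V, with derivative U'
    (hderiv : ∀ x ∈ V, ∀ᵐ ω ∂(κ x), ∀ z ∈ V, HasDerivAt (U ω) (U' ω z) z)
    -- (i) a measurable Lipschitz modulus A for the derivative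
    (A : Ω → ℝ) (hAmeas : Measurable A) (hA0 : ∀ ω, 0 ≤ A ω)
    (hlip : ∀ x ∈ V, ∀ᵐ ω ∂(κ x), ∀ z ∈ V, ∀ z' ∈ V,
      |U' ω z' - U' ω z| ≤ A ω * |z' - z|)
    (hAint : ∀ x ∈ V, Integrable A (κ x))
    (hAcont : ContinuousOn (fun x => ∫ ω, A ω ∂(κ x)) V)
    -- (ii) continuity in x of the conditional mean of the derivative
    (hU'cont : ∀ z' ∈ V, ContinuousOn (fun x => ∫ ω, U' ω z' ∂(κ x)) V)
    -- integrability (so that all the conditional means below are well defined)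
    (hUint : ∀ x ∈ V, ∀ z ∈ V, Integrable (fun ω => U ω z) (κ x))
    (hU'int : ∀ x ∈ V, ∀ z ∈ V, Integrable (fun ω => U' ω z) (κ x))
    -- the sequences
    (xs : ℕ → ℝ) (hxs : ∀ n, xs n ∈ V) (hxsto : Tendsto xs atTop (nhds x₀))
    (q : ℝ → ℝ) (hq : ∀ n, q (xs n) ∈ V) (hqne : ∀ n, q (xs n) ≠ xs n)
    (hqto : Tendsto (fun n => q (xs n)) atTop (nhds x₀)) :
    Tendsto (fun n => ∫ ω, (U ω (q (xs n)) - U ω (xs n)) / (q (xs n) - xs n) ∂(κ (xs n)))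
      atTop (nhds (∫ ω, U' ω x₀ ∂(κ x₀))) := by

  -- abbreviations
  set c : ℕ → ℝ := fun n => |q (xs n) - xs n| + |xs n - x₀| with hc
  have hVsub : ∀ n, uIcc (xs n) (q (xs n)) ⊆ V := fun n =>
    hVconn.uIcc_subset (hxs n) (hq n)
  -- pointwise a.e. bound via the mean value inequality
  have key : ∀ n, ∀ᵐ ω ∂(κ (xs n)),
      |(U ω (q (xs n)) - U ω (xs n)) / (q (xs n) - xs n) - U' ω x₀| ≤ A ω * c n := by
    intro n
    filter_upwards [hderiv (xs n) (hxs n), hlip (xs n) (hxs n)] with ω hd hl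
    set a := xs n with ha
    set b := q (xs n) with hb
    have hab : b - a ≠ 0 := sub_ne_zero.2 (hqne n)
    have hsub := hVsub n
    have hmvt : |U ω b - U ω a - U' ω a * (b - a)| ≤ A ω * |b - a| * |b - a| := by
      have hmain := Convex.norm_image_sub_le_of_norm_hasDerivWithin_le
        (f := fun z => U ω z - U' ω a * z) (f' := fun z => U' ω z - U' ω a)
        (s := uIcc a b) (C := A ω * |b - a|)
        (fun z hz => by
          have h1 : HasDerivAt (fun z => U ω z - U' ω a * z) (U' ω z - U' ω a) z := by
            exact ((hd z (hsub hz)).sub ((hasDerivAt_id z).const_mul (U' ω a))).congr_deriv (by ring)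
          exact h1.hasDerivWithinAt)
        (fun z hz => by
          rw [Real.norm_eq_abs]
          calc |U' ω z - U' ω a| ≤ A ω * |z - a| := hl a (hxs n) z (hsub hz)
            _ ≤ A ω * |b - a| :=
                mul_le_mul_of_nonneg_left (abs_sub_left_of_mem_uIcc hz) (hA0 ω))
        (convex_uIcc a b) left_mem_uIcc right_mem_uIcc
      rw [Real.norm_eq_abs, Real.norm_eq_abs] at hmain
      calc |U ω b - U ω a - U' ω a * (b - a)|
          = |(U ω b - U' ω a * b) - (U ω a - U' ω a * a)| := by ring_nf
        _ ≤ A ω * |b - a| * |b - a| := hmain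
    have h1 : |(U ω b - U ω a) / (b - a) - U' ω a| ≤ A ω * |b - a| := by
      have heq : (U ω b - U ω a) / (b - a) - U' ω a
          = (U ω b - U ω a - U' ω a * (b - a)) / (b - a) := by field_simp
      rw [heq, abs_div, div_le_iff₀ (abs_pos.2 hab)]
      exact hmvt
    have h2 : |U' ω a - U' ω x₀| ≤ A ω * |a - x₀| := hl x₀ hx₀ a (hxs n)
    calc |(U ω b - U ω a) / (b - a) - U' ω x₀|
        ≤ |(U ω b - U ω a) / (b - a) - U' ω a| + |U' ω a - U' ω x₀| := abs_sub_le _ _ _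
      _ ≤ A ω * |b - a| + A ω * |a - x₀| := add_le_add h1 h2
      _ = A ω * c n := by rw [hc]; ring
  -- integral bound
  have hDQint : ∀ n, Integrable
      (fun ω => (U ω (q (xs n)) - U ω (xs n)) / (q (xs n) - xs n)) (κ (xs n)) := fun n =>
    ((hUint (xs n) (hxs n) (q (xs n)) (hq n)).sub
      (hUint (xs n) (hxs n) (xs n) (hxs n))).div_const _
  have hU'x₀int : ∀ n, Integrable (fun ω => U' ω x₀) (κ (xs n)) := fun n =>
    hU'int (xs n) (hxs n) x₀ hx₀
  have hbound : ∀ n,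
      |(∫ ω, (U ω (q (xs n)) - U ω (xs n)) / (q (xs n) - xs n) ∂(κ (xs n)))
        - ∫ ω, U' ω x₀ ∂(κ (xs n))| ≤ c n * ∫ ω, A ω ∂(κ (xs n)) := by
    intro n
    rw [← integral_sub (hDQint n) (hU'x₀int n)]
    have hn : ‖∫ ω, ((U ω (q (xs n)) - U ω (xs n)) / (q (xs n) - xs n) - U' ω x₀)
        ∂(κ (xs n))‖ ≤ ∫ ω, c n * A ω ∂(κ (xs n)) := by
      apply norm_integral_le_of_norm_le ((hAint (xs n) (hxs n)).const_mul (c n))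
      filter_upwards [key n] with ω hω
      rw [Real.norm_eq_abs]
      calc |(U ω (q (xs n)) - U ω (xs n)) / (q (xs n) - xs n) - U' ω x₀|
          ≤ A ω * c n := hω
        _ = c n * A ω := mul_comm _ _
    rw [Real.norm_eq_abs, integral_const_mul] at hn
    exact hn
  -- convergence pieces
  have hxV : Tendsto xs atTop (nhdsWithin x₀ V) :=
    tendsto_nhdsWithin_iff.2 ⟨hxsto, Eventually.of_forall hxs⟩
  have hBlim : Tendsto (fun n => ∫ ω, A ω ∂(κ (xs n))) atTop
      (nhds (∫ ω, A ω ∂(κ x₀))) := ((hAcont x₀ hx₀).tendsto).comp hxV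
  have hclim : Tendsto c atTop (nhds 0) := by
    have h1 : Tendsto (fun n => |q (xs n) - xs n|) atTop (nhds 0) := by
      have := (hqto.sub hxsto).abs
      simpa using this
    have h2 : Tendsto (fun n => |xs n - x₀|) atTop (nhds 0) := by
      have := (hxsto.sub (tendsto_const_nhds (x := x₀))).abs
      simpa using this
    simpa using h1.add h2
  have h0 : Tendsto (fun n => c n * ∫ ω, A ω ∂(κ (xs n))) atTop (nhds 0) := by
    simpa using hclim.mul hBlim
  have hdiff0 : Tendsto (fun n =>
      (∫ ω, (U ω (q (xs n)) - U ω (xs n)) / (q (xs n) - xs n) ∂(κ (xs n)))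
        - ∫ ω, U' ω x₀ ∂(κ (xs n))) atTop (nhds 0) :=
    squeeze_zero_norm (fun n => by simpa [Real.norm_eq_abs] using hbound n) h0
  have hE : Tendsto (fun n => ∫ ω, U' ω x₀ ∂(κ (xs n))) atTop
      (nhds (∫ ω, U' ω x₀ ∂(κ x₀))) := ((hU'cont x₀ hx₀ x₀ hx₀).tendsto).comp hxV
  have := hdiff0.add hE
  simpa using this
end

section
/- Let F_{10}, F_{20} : ℝ → [0,1] be nondecreasing and right-continuous, and fix x ∈ ℝ with p := F_{20}(x) ∈ (0,1). Define the generalized inverse F^{−1}(u) := inf{z ∈ ℝ : F(z) ≥ u} and set q := F_{10}^{−1}(p). Assume F_{10}(q) = p and F_{10} is differentiable at q with F_{10}'(q) > 0. Let (t_n) be a sequence of nonzero reals with t_n → 0, and let h_{1n}, h_{2n} : ℝ → ℝ be bounded functions converging uniformly on ℝ to bounded continuous functions h_1, h_2 respectively, such that for every n the functions F_{10} + t_n h_{1n} and F_{20} + t_n h_{2n} are nondecreasing with values in [0,1]. Then lim_{n→∞} [ (F_{10} + t_n h_{1n})^{−1}( (F_{20} + t_n h_{2n})(x) ) − q ] /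 t_n = ( h_2(x) − h_1(q) ) / F_{10}'(q). -/
open MeasureTheory Set Filter

/-- Generalized inverse (quantile function) of a function `F : ℝ → ℝ`. -/
noncomputable def ginv (F : ℝ → ℝ) (p : ℝ) : ℝ := sInf {z | p ≤ F z}

/-- Hadamard differentiability, tangentially to continuous functions, of
the quantile-quantile map `(F₁, F₂) ↦ F₁⁻¹(F₂(x))` at `(F₁₀, F₂₀)`, where `F₁₀` is
differentiable at `q = F₁₀⁻¹(F₂₀(x))` with positive derivative: for perturbations
`F₁₀ + tₙ h₁ₙ`, `F₂₀ + tₙ h₂ₙ` that remain cdf-like, with `h₁ₙ → h₁`, `h₂ₙ → h₂`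
uniformly and `h₁, h₂` bounded continuous, the difference quotient converges to
`(h₂(x) − h₁(q))/F₁₀'(q)`. -/
theorem stmt16
    (F₁₀ F₂₀ : ℝ → ℝ)
    (hF₁₀m : Monotone F₁₀) (hF₂₀m : Monotone F₂₀)
    (hF₁₀rc : ∀ z : ℝ, ContinuousWithinAt F₁₀ (Ici z) z)
    (hF₂₀rc : ∀ z : ℝ, ContinuousWithinAt F₂₀ (Ici z) z)
    (hF₁₀01 : ∀ z, F₁₀ z ∈ Icc (0:ℝ) 1) (hF₂₀01 : ∀ z, F₂₀ z ∈ Icc (0:ℝ) 1)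
    (x p : ℝ) (hp : p = F₂₀ x) (hp01 : p ∈ Ioo (0:ℝ) 1)
    (q : ℝ) (hq : q = ginv F₁₀ p) (hF₁₀q : F₁₀ q = p)
    (d : ℝ) (hd : 0 < d) (hder : HasDerivAt F₁₀ d q)
    (t : ℕ → ℝ) (ht0 : ∀ n, t n ≠ 0) (htto : Tendsto t atTop (nhds 0))
    (h₁n h₂n : ℕ → ℝ → ℝ) (h₁ h₂ : ℝ → ℝ)
    (hb₁n : ∀ n, ∃ C, ∀ z, |h₁n n z| ≤ C) (hb₂n : ∀ n, ∃ C, ∀ z, |h₂n n z| ≤ C)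
    (hu₁ : TendstoUniformly h₁n h₁ atTop) (hu₂ : TendstoUniformly h₂n h₂ atTop)
    (hc₁ : Continuous h₁) (hc₂ : Continuous h₂)
    (hb₁ : ∃ C, ∀ z, |h₁ z| ≤ C) (hb₂ : ∃ C, ∀ z, |h₂ z| ≤ C)
    (hmono : ∀ n, Monotone (fun z => F₁₀ z + t n * h₁n n z) ∧
      Monotone (fun z => F₂₀ z + t n * h₂n n z))
    (h01 : ∀ n z, F₁₀ z + t n * h₁n n z ∈ Icc (0:ℝ) 1 ∧
      F₂₀ z + t n * h₂n n z ∈ Icc (0:ℝ) 1) :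
    Tendsto (fun n =>
        (ginv (fun z => F₁₀ z + t n * h₁n n z) (F₂₀ x + t n * h₂n n x) - q) / t n)
      atTop (nhds ((h₂ x - h₁ q) / d)) := by
  obtain ⟨hp0, hp1⟩ := hp01
  have hslope : Tendsto (slope F₁₀ q) (nhdsWithin q {q}ᶜ) (nhds d) :=
    hasDerivAt_iff_tendsto_slope.1 hder
  -- Step A: a margin δ on which the slope is at least d/2
  obtain ⟨δ₀, hδ₀, hδ₀p⟩ := (Metric.tendsto_nhdsWithin_nhds.1 hslope) (d / 2) (by positivity)
  have hδδ : ∀ δ : ℝ, 0 < δ → δ = δ₀ / 2 → True := fun _ _ _ => trivial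
  obtain ⟨δ, hδ, hδdef⟩ : ∃ δ : ℝ, 0 < δ ∧ δ = δ₀ / 2 := ⟨δ₀ / 2, by positivity, rfl⟩
  have hslope_bound : ∀ z : ℝ, z ≠ q → |z - q| ≤ δ → d / 2 ≤ slope F₁₀ q z := by
    intro z hz hzd
    have h1 : z ∈ ({q}ᶜ : Set ℝ) := hz
    have h2 : dist z q < δ₀ := by
      rw [Real.dist_eq]; calc |z - q| ≤ δ := hzd
        _ < δ₀ := by rw [hδdef] at *; linarith
    have := hδ₀p h1 h2
    rw [Real.dist_eq, abs_lt] at this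
    linarith [this.1]
  have hlo : F₁₀ (q - δ) ≤ p - d * δ / 2 := by
    have habs : |q - δ - q| ≤ δ := by
      rw [show q - δ - q = -δ by ring, abs_neg, abs_of_pos hδ]
    have hs := hslope_bound (q - δ) (by intro h; have := sub_eq_self.1 h; linarith) habs
    rw [slope_def_field, hF₁₀q, show q - δ - q = -δ by ring] at hs
    rw [le_div_iff_of_neg (by linarith : (-δ : ℝ) < 0)] at hs
    nlinarith
  have hhi : p + d * δ / 2 ≤ F₁₀ (q + δ) := by
    have habs : |q + δ - q| ≤ δ := by
      rw [show q + δ - q = δ by ring, abs_of_pos hδ]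
    have hs := hslope_bound (q + δ) (by intro h; nlinarith [add_eq_left.1 h]) habs
    rw [slope_def_field, hF₁₀q, show q + δ - q = δ by ring, le_div_iff₀ hδ] at hs
    nlinarith
  -- Step B: eventual uniform bounds
  obtain ⟨C₁, hC₁⟩ := hb₁
  obtain ⟨C₂, hC₂⟩ := hb₂
  have hC₁0 : 0 ≤ C₁ := le_trans (abs_nonneg _) (hC₁ 0)
  have hC₂0 : 0 ≤ C₂ := le_trans (abs_nonneg _) (hC₂ 0)
  obtain ⟨C, hC0, hCb₁, hCb₂⟩ : ∃ C : ℝ, 0 < C ∧ C₁ + 1 ≤ C ∧ C₂ + 1 ≤ C :=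
    ⟨max C₁ C₂ + 1, by have := le_max_left C₁ C₂; linarith,
      by have := le_max_left C₁ C₂; linarith, by have := le_max_right C₁ C₂; linarith⟩
  have hEb : ∀ᶠ n in atTop, ∀ z, |h₁n n z| ≤ C ∧ |h₂n n z| ≤ C := by
    have e1 := (Metric.tendstoUniformly_iff.1 hu₁) 1 one_pos
    have e2 := (Metric.tendstoUniformly_iff.1 hu₂) 1 one_pos
    filter_upwards [e1, e2] with n H1 H2 z
    have d1 := H1 z; have d2 := H2 z
    rw [Real.dist_eq] at d1 d2
    constructor
    · have h := abs_sub_abs_le_abs_sub (h₁n n z) (h₁ z)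
      rw [abs_sub_comm] at h
      have := hC₁ z
      linarith
    · have h := abs_sub_abs_le_abs_sub (h₂n n z) (h₂ z)
      rw [abs_sub_comm] at h
      have := hC₂ z
      linarith
  have hEt : ∀ᶠ n in atTop, |t n| * C < d * δ / 4 := by
    have h0 : Tendsto (fun n => |t n| * C) atTop (nhds (|(0 : ℝ)| * C)) :=
      (htto.abs).mul_const C
    simp only [abs_zero, zero_mul] at h0
    exact Tendsto.eventually_lt_const (by positivity) h0
  -- Step C: eventual structural facts about the level sets
  have hE : ∀ᶠ n in atTop,
      (∀ z, z ≤ q - δ → F₁₀ z + t n * h₁n n z < F₂₀ x + t n * h₂n n x) ∧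
      (F₂₀ x + t n * h₂n n x ≤ F₁₀ (q + δ) + t n * h₁n n (q + δ)) := by
    filter_upwards [hEb, hEt] with n Hb Ht
    have hb1 : ∀ z, |t n * h₁n n z| ≤ |t n| * C := fun z => by
      rw [abs_mul]; exact mul_le_mul_of_nonneg_left (Hb z).1 (abs_nonneg _)
    have hb2 : |t n * h₂n n x| ≤ |t n| * C := by
      rw [abs_mul]; exact mul_le_mul_of_nonneg_left (Hb x).2 (abs_nonneg _)
    have hpx : F₂₀ x = p := hp.symm
    constructor
    · intro z hz
      have h1 : F₁₀ z ≤ p - d * δ / 2 := le_trans (hF₁₀m hz) hlo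
      have h2 := abs_le.1 (hb1 z)
      have h3 := abs_le.1 hb2
      rw [hpx]; linarith [h2.2, h3.1]
    · have h2 := abs_le.1 (hb1 (q + δ))
      have h3 := abs_le.1 hb2
      rw [hpx]; linarith [h2.1, h3.2]
  -- Step D: convergence of the test quotients
  have hφ : ∀ r : ℝ, Tendsto (fun n =>
      (F₁₀ (q + t n * r) + t n * h₁n n (q + t n * r) - (F₂₀ x + t n * h₂n n x)) / t n)
      atTop (nhds (r * d + h₁ q - h₂ x)) := by
    intro r
    have hqr : Tendsto (fun n => q + t n * r) atTop (nhds q) := by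
      have h := (htto.mul_const r).const_add q
      simpa using h
    have hterm1 : Tendsto (fun n => (F₁₀ (q + t n * r) - p) / t n) atTop (nhds (r * d)) := by
      rcases eq_or_ne r 0 with hr | hr
      · subst hr
        simp only [mul_zero, add_zero, hF₁₀q, sub_self, zero_div, zero_mul]
        exact tendsto_const_nhds
      · have hne : ∀ n, q + t n * r ≠ q := by
          intro n h
          exact mul_ne_zero (ht0 n) hr (by linarith)
        have hqr' : Tendsto (fun n => q + t n * r) atTop (nhdsWithin q {q}ᶜ) :=
          tendsto_nhdsWithin_of_tendsto_nhds_of_eventually_within _ hqr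
            (Eventually.of_forall fun n => hne n)
        have hcomp := hslope.comp hqr'
        have hmul : Tendsto (fun n => r * slope F₁₀ q (q + t n * r)) atTop (nhds (r * d)) :=
          hcomp.const_mul r
        refine hmul.congr fun n => ?_
        rw [slope_def_field, hF₁₀q, show q + t n * r - q = t n * r by ring]
        field_simp [ht0 n, hr]
    have hterm2 : Tendsto (fun n => h₁n n (q + t n * r)) atTop (nhds (h₁ q)) :=
      hu₁.tendsto_comp hc₁.continuousAt hqr
    have hterm3 : Tendsto (fun n => h₂n n x) atTop (nhds (h₂ x)) := hu₂.tendsto_at x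
    have hsum := (hterm1.add hterm2).sub hterm3
    refine hsum.congr fun n => ?_
    have hpx : F₂₀ x = p := hp.symm
    rw [hpx]
    field_simp [ht0 n]
    ring
  -- Step E: the key sandwich implications
  have hkey : ∀ r : ℝ, ∀ᶠ n in atTop,
      ((F₁₀ (q + t n * r) + t n * h₁n n (q + t n * r) - (F₂₀ x + t n * h₂n n x)) / t n < 0 →
        r ≤ (ginv (fun z => F₁₀ z + t n * h₁n n z) (F₂₀ x + t n * h₂n n x) - q) / t n) ∧
      (0 < (F₁₀ (q + t n * r) + t n * h₁n n (q + t n * r) - (F₂₀ x + t n * h₂n n x)) / t n →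
        (ginv (fun z => F₁₀ z + t n * h₁n n z) (F₂₀ x + t n * h₂n n x) - q) / t n ≤ r) := by
    intro r
    filter_upwards [hE] with n hEn
    obtain ⟨hE1, hE2⟩ := hEn
    have hmonn : Monotone fun z => F₁₀ z + t n * h₁n n z := (hmono n).1
    have hgdef : ginv (fun z => F₁₀ z + t n * h₁n n z) (F₂₀ x + t n * h₂n n x)
        = sInf {z : ℝ | F₂₀ x + t n * h₂n n x ≤ F₁₀ z + t n * h₁n n z} := rfl
    have hbdd : BddBelow {z : ℝ | F₂₀ x + t n * h₂n n x ≤ F₁₀ z + t n * h₁n n z} := by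
      refine ⟨q - δ, fun z hz => ?_⟩
      by_contra hzc; push_neg at hzc
      exact absurd hz (not_le.2 (hE1 z hzc.le))
    have hne : ({z : ℝ | F₂₀ x + t n * h₂n n x ≤ F₁₀ z + t n * h₁n n z}).Nonempty :=
      ⟨q + δ, hE2⟩
    constructor
    · intro hneg
      rcases (ht0 n).lt_or_gt with htn | htn
      · have hNpos : 0 < F₁₀ (q + t n * r) + t n * h₁n n (q + t n * r)
            - (F₂₀ x + t n * h₂n n x) := by
          rcases div_neg_iff.1 hneg with ⟨h1, h2⟩ | ⟨h1, h2⟩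
          · exact h1
          · linarith
        have hsS : (q + t n * r) ∈
            {z : ℝ | F₂₀ x + t n * h₂n n x ≤ F₁₀ z + t n * h₁n n z} := by
          simp only [mem_setOf_eq]; linarith
        have hle := csInf_le hbdd hsS
        rw [hgdef, le_div_iff_of_neg htn]
        linarith
      · have hNneg : F₁₀ (q + t n * r) + t n * h₁n n (q + t n * r)
            - (F₂₀ x + t n * h₂n n x) < 0 := by
          rcases div_neg_iff.1 hneg with ⟨h1, h2⟩ | ⟨h1, h2⟩
          · linarith
          · exact h1
        have hlb : ∀ z ∈ {z : ℝ | F₂₀ x + t n * h₂n n x ≤ F₁₀ z + t n * h₁n n z},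
            q + t n * r ≤ z := by
          intro z hz
          by_contra hc; push_neg at hc
          have hm := hmonn hc.le
          simp only [mem_setOf_eq] at hz
          simp only at hm
          linarith
        have hge := le_csInf hne hlb
        rw [hgdef, le_div_iff₀ htn]
        linarith
    · intro hpos
      rcases (ht0 n).lt_or_gt with htn | htn
      · have hNneg : F₁₀ (q + t n * r) + t n * h₁n n (q + t n * r)
            - (F₂₀ x + t n * h₂n n x) < 0 := by
          rcases div_pos_iff.1 hpos with ⟨h1, h2⟩ | ⟨h1, h2⟩
          · linarith
          · exact h1
        have hlb : ∀ z ∈ {z : ℝ | F₂₀ x + t n * h₂n n x ≤ F₁₀ z + t n * h₁n n z},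
            q + t n * r ≤ z := by
          intro z hz
          by_contra hc; push_neg at hc
          have hm := hmonn hc.le
          simp only [mem_setOf_eq] at hz
          simp only at hm
          linarith
        have hge := le_csInf hne hlb
        rw [hgdef, div_le_iff_of_neg htn]
        linarith
      · have hNpos : 0 < F₁₀ (q + t n * r) + t n * h₁n n (q + t n * r)
            - (F₂₀ x + t n * h₂n n x) := by
          rcases div_pos_iff.1 hpos with ⟨h1, h2⟩ | ⟨h1, h2⟩
          · exact h1
          · linarith
        have hsS : (q + t n * r) ∈
            {z : ℝ | F₂₀ x + t n * h₂n n x ≤ F₁₀ z + t n * h₁n n z} := by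
          simp only [mem_setOf_eq]; linarith
        have hle := csInf_le hbdd hsS
        rw [hgdef, div_le_iff₀ htn]
        linarith
  -- Step F: assemble via order-topology characterization
  refine tendsto_order.2 ⟨?_, ?_⟩
  · intro b hb
    set r := (b + (h₂ x - h₁ q) / d) / 2 with hrdef
    have hbr : b < r := by rw [hrdef]; linarith
    have hra : r < (h₂ x - h₁ q) / d := by rw [hrdef]; linarith
    have hψ : r * d + h₁ q - h₂ x < 0 := by
      have h := mul_lt_mul_of_pos_right hra hd
      rw [div_mul_cancel₀ _ hd.ne'] at h
      linarith
    have hev := Tendsto.eventually_lt_const hψ (hφ r)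
    filter_upwards [hkey r, hev] with n hk hn
    exact lt_of_lt_of_le hbr (hk.1 hn)
  · intro b hb
    set r := (b + (h₂ x - h₁ q) / d) / 2 with hrdef
    have hbr : r < b := by rw [hrdef]; linarith
    have hra : (h₂ x - h₁ q) / d < r := by rw [hrdef]; linarith
    have hψ : 0 < r * d + h₁ q - h₂ x := by
      have h := mul_lt_mul_of_pos_right hra hd
      rw [div_mul_cancel₀ _ hd.ne'] at h
      linarith
    have hev := Tendsto.eventually_const_lt hψ (hφ r)
    filter_upwards [hkey r, hev] with n hk hn
    exact lt_of_le_of_lt (hk.2 hn) hbr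
end

section
/- Let f_1, f_2 : ℝ → ℝ be continuous strictly increasing bijections, and α, β : ℝ → ℝ Borel measurable such that for every x ∈ ℝ the map e ↦ α(e) + x·β(e) is strictly increasing. For t ∈ {1,2}, let (U_t, η_t) be pairs of real random variables such that (U_1, η_1) and (U_2, η_2) have the same joint distribution, let h_t : ℝ → ℝ be continuous and strictly increasing, X_t := h_t(η_t), and Y_t := f_t(α(U_t) + X_t·β(U_t)). Define Ũ_t(x) := f_2(α(U_t) + x·β(U_t)) and g_t := f_t ∘ f_2^{−1}. Then: (a) g_2 is the identity and g_1 : ℝ → ℝ is strictly increasing; (b) Y_t = g_t(Ũ_t(X_t)) almost surely, and for each x the map u ↦ f_2(α(u) + x β(u)) has Ũ_t(x) as its value at U_t; (c) for every x ∈ ℝ, the joint distribution of (Ũ_t(x), η_t) is the same for t = 1 and t = 2; consequently, if in addition the cdf F_{η_t} = F_η is continuous and strictly increasing on ℝ, then V_t := F_{X_t}(X_t) = F_η(η_t) almost surely and the conditional distribution of Ũ_t(x) given V_t = v does not depend on t. -/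
open MeasureTheory Set Filter

/-- The (real-valued) cumulative distribution function of a measure on `ℝ`. -/
noncomputable def rcdf (μ : Measure ℝ) (x : ℝ) : ℝ := (μ (Iic x)).toReal

/-- the quantile-regression-type model `Y_t = f_t(α(U_t) + X_t β(U_t))`,
`X_t = h_t(η_t)`, with time-invariant joint law of `(U_t, η_t)`, satisfies the
structural assumptions of the paper with `Ũ_t(x) = f₂(α(U_t) + x β(U_t))` and
`g_t = f_t ∘ f₂⁻¹`: (a) `g₂ = id` and `g₁` is strictly increasing; (b) `Y_t` equals
`g_t(Ũ_t(X_t))` a.s. and `Ũ_t(x)` is the value of `u ↦ f₂(α(u) + x β(u))` at `U_t`;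
(c) `(Ũ_t(x), η_t)` is equidistributed across `t`, and if moreover the common cdf
`F_η` is continuous and strictly increasing then `V_t = F_η(η_t)` a.s. and the
(joint, hence conditional-on-`V_t = v`) law of `(Ũ_t(x), V_t)` does not depend
on `t`. -/
theorem stmt18
    {Ω : Type*} [MeasurableSpace Ω] (P : Measure Ω) (hP : IsProbabilityMeasure P)
    -- the time trends f₁, f₂: continuous strictly increasing bijections of ℝ
    (f₁ f₂ : ℝ → ℝ)
    (hf₁c : Continuous f₁) (hf₂c : Continuous f₂)
    (hf₁m : StrictMono f₁) (hf₂m : StrictMono f₂)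
    (hf₁b : Function.Bijective f₁) (hf₂b : Function.Bijective f₂)
    -- the coefficient functions
    (α β : ℝ → ℝ) (hα : Measurable α) (hβ : Measurable β)
    (hαβ : ∀ x : ℝ, StrictMono (fun e => α e + x * β e))
    -- the unobservables, with time-invariant joint law
    (U₁ U₂ η₁ η₂ : Ω → ℝ)
    (hU₁ : Measurable U₁) (hU₂ : Measurable U₂)
    (hη₁ : Measurable η₁) (hη₂ : Measurable η₂)
    (hsame : P.map (fun ω => (U₁ ω, η₁ ω)) = P.map (fun ω => (U₂ ω, η₂ ω)))
    -- the first stages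
    (h₁ h₂ : ℝ → ℝ) (hh₁c : Continuous h₁) (hh₂c : Continuous h₂)
    (hh₁m : StrictMono h₁) (hh₂m : StrictMono h₂)
    (X₁ X₂ : Ω → ℝ) (hX₁ : X₁ = fun ω => h₁ (η₁ ω)) (hX₂ : X₂ = fun ω => h₂ (η₂ ω))
    -- outcomes
    (Y₁ Y₂ : Ω → ℝ)
    (hY₁ : Y₁ = fun ω => f₁ (α (U₁ ω) + X₁ ω * β (U₁ ω)))
    (hY₂ : Y₂ = fun ω => f₂ (α (U₂ ω) + X₂ ω * β (U₂ ω)))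
    -- the redefined unobservables and time trends
    (Ut₁ Ut₂ : ℝ → Ω → ℝ)
    (hUt₁ : Ut₁ = fun x ω => f₂ (α (U₁ ω) + x * β (U₁ ω)))
    (hUt₂ : Ut₂ = fun x ω => f₂ (α (U₂ ω) + x * β (U₂ ω)))
    (g₁ g₂ : ℝ → ℝ)
    (hg₁ : g₁ = f₁ ∘ Function.invFun f₂) (hg₂ : g₂ = f₂ ∘ Function.invFun f₂) :
    -- (a)
    (g₂ = id ∧ StrictMono g₁) ∧
    -- (b)
    ((∀ᵐ ω ∂P, Y₁ ω = g₁ (Ut₁ (X₁ ω) ω) ∧ Y₂ ω = g₂ (Ut₂ (X₂ ω) ω)) ∧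
      (∀ (x : ℝ) (ω : Ω), Ut₁ x ω = f₂ (α (U₁ ω) + x * β (U₁ ω)) ∧
        Ut₂ x ω = f₂ (α (U₂ ω) + x * β (U₂ ω)))) ∧
    -- (c)
    ((∀ x : ℝ, P.map (fun ω => (Ut₁ x ω, η₁ ω)) = P.map (fun ω => (Ut₂ x ω, η₂ ω))) ∧
      (Continuous (rcdf (P.map η₁)) → StrictMono (rcdf (P.map η₁)) →
        (∀ᵐ ω ∂P, rcdf (P.map X₁) (X₁ ω) = rcdf (P.map η₁) (η₁ ω)) ∧
        (∀ᵐ ω ∂P, rcdf (P.map X₂) (X₂ ω) = rcdf (P.map η₁) (η₂ ω)) ∧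
        (∀ x : ℝ,
          P.map (fun ω => (Ut₁ x ω, rcdf (P.map η₁) (η₁ ω)))
            = P.map (fun ω => (Ut₂ x ω, rcdf (P.map η₁) (η₂ ω)))))) := by

  have hinv : Function.LeftInverse (Function.invFun f₂) f₂ :=
    Function.leftInverse_invFun hf₂b.1
  have hrinv : Function.RightInverse (Function.invFun f₂) f₂ :=
    Function.rightInverse_invFun hf₂b.2
  have hinvmono : StrictMono (Function.invFun f₂) := by
    intro a b hab
    have : f₂ (Function.invFun f₂ a) < f₂ (Function.invFun f₂ b) := by
      rw [hrinv a, hrinv b]; exact hab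
    exact hf₂m.lt_iff_lt.mp this
  refine ⟨⟨?_, ?_⟩, ⟨?_, ?_⟩, ?_, ?_⟩
  · funext y; simp [hg₂, hrinv y]
  · rw [hg₁]; exact hf₁m.comp hinvmono
  · filter_upwards with ω
    constructor
    · simp [hY₁, hg₁, hUt₁, hinv _]
    · simp [hY₂, hg₂, hUt₂, hinv _]
  · intro x ω; simp [hUt₁, hUt₂]
  · intro x
    set φ : ℝ × ℝ → ℝ × ℝ := fun p => (f₂ (α p.1 + x * β p.1), p.2) with hφ
    have hφm : Measurable φ :=
      ((hf₂c.measurable.comp ((hα.comp measurable_fst).add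
        ((measurable_const.mul (hβ.comp measurable_fst)))))).prodMk measurable_snd
    have e1 : (fun ω => (Ut₁ x ω, η₁ ω)) = φ ∘ (fun ω => (U₁ ω, η₁ ω)) := by
      funext ω; simp [hUt₁, hφ]
    have e2 : (fun ω => (Ut₂ x ω, η₂ ω)) = φ ∘ (fun ω => (U₂ ω, η₂ ω)) := by
      funext ω; simp [hUt₂, hφ]
    rw [e1, e2, ← Measure.map_map hφm (hU₁.prodMk hη₁),
      ← Measure.map_map hφm (hU₂.prodMk hη₂), hsame]
  · intro hFc hFm
    have hη12 : P.map η₁ = P.map η₂ := by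
      have : (fun ω => η₁ ω) = Prod.snd ∘ (fun ω => (U₁ ω, η₁ ω)) := rfl
      calc P.map η₁ = (P.map (fun ω => (U₁ ω, η₁ ω))).map Prod.snd :=
            (Measure.map_map measurable_snd (hU₁.prodMk hη₁)).symm
        _ = (P.map (fun ω => (U₂ ω, η₂ ω))).map Prod.snd := by rw [hsame]
        _ = P.map η₂ := Measure.map_map measurable_snd (hU₂.prodMk hη₂)
    have key : ∀ (h : ℝ → ℝ), Continuous h → StrictMono h → ∀ (η : Ω → ℝ),
        Measurable η → ∀ e : ℝ,
        rcdf (P.map (fun ω => h (η ω))) (h e) = rcdf (P.map η) e := by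
      intro h hc hm η hη e
      have : P.map (fun ω => h (η ω)) = (P.map η).map h :=
        (Measure.map_map hc.measurable hη).symm
      rw [rcdf, this, Measure.map_apply hc.measurable measurableSet_Iic]
      have : h ⁻¹' Iic (h e) = Iic e := by
        ext y; simp [hm.le_iff_le]
      rw [this]; rfl
    refine ⟨?_, ?_, ?_⟩
    · filter_upwards with ω
      rw [hX₁]
      exact key h₁ hh₁c hh₁m η₁ hη₁ (η₁ ω)
    · filter_upwards with ω
      rw [hX₂, hη12]
      exact key h₂ hh₂c hh₂m η₂ hη₂ (η₂ ω)
    · intro x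
      set F := rcdf (P.map η₁) with hF
      set ψ : ℝ × ℝ → ℝ × ℝ := fun p => (p.1, F p.2) with hψ
      have hψm : Measurable ψ :=
        measurable_fst.prodMk (hFc.measurable.comp measurable_snd)
      have hUt₁m : Measurable (Ut₁ x) := by
        rw [hUt₁]
        exact hf₂c.measurable.comp
          ((hα.comp hU₁).add (measurable_const.mul (hβ.comp hU₁)))
      have hUt₂m : Measurable (Ut₂ x) := by
        rw [hUt₂]
        exact hf₂c.measurable.comp
          ((hα.comp hU₂).add (measurable_const.mul (hβ.comp hU₂)))
      have e1 : (fun ω => (Ut₁ x ω, F (η₁ ω))) = ψ ∘ (fun ω => (Ut₁ x ω, η₁ ω)) := rfl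
      have e2 : (fun ω => (Ut₂ x ω, F (η₂ ω))) = ψ ∘ (fun ω => (Ut₂ x ω, η₂ ω)) := rfl
      rw [e1, e2, ← Measure.map_map hψm (hUt₁m.prodMk hη₁),
        ← Measure.map_map hψm (hUt₂m.prodMk hη₂)]
      congr 1
      -- equality of joint laws of (Ut x, η) across t: same as part (c) first component
      set φ : ℝ × ℝ → ℝ × ℝ := fun p => (f₂ (α p.1 + x * β p.1), p.2) with hφ
      have hφm : Measurable φ :=
        ((hf₂c.measurable.comp ((hα.comp measurable_fst).add
          ((measurable_const.mul (hβ.comp measurable_fst)))))).prodMk measurable_snd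
      have e1' : (fun ω => (Ut₁ x ω, η₁ ω)) = φ ∘ (fun ω => (U₁ ω, η₁ ω)) := by
        funext ω; simp [hUt₁, hφ]
      have e2' : (fun ω => (Ut₂ x ω, η₂ ω)) = φ ∘ (fun ω => (U₂ ω, η₂ ω)) := by
        funext ω; simp [hUt₂, hφ]
      rw [e1', e2', ← Measure.map_map hφm (hU₁.prodMk hη₁),
        ← Measure.map_map hφm (hU₂.prodMk hη₂), hsame]
end
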